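/- Let A be a residuated lattice. Then F is pure, i.e. σ(F) = F, for every filter F of A if and only if for every element a, the principal filter 𝔉(a) is pure. -/

import Mathlib

structure ResiduatedLattice (A : Type*) [Lattice A] [BoundedOrder A] where
  mul : A → A → A
  himp : A → A → A
  mul_comm : ∀ x y : A, mul x y = mul y x
  mul_assoc : ∀ x y z : A, mul (mul x y) z = mul x (mul y z)
  mul_top : ∀ x : A, mul x ⊤ = x
  adj : ∀ x y z : A, mul x z ≤ y ↔ z ≤ himp x y

namespace ResiduatedLattice

variable {A : Type*} [Lattice A] [BoundedOrder A]

/-- ¬a := a → 0 -/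
def neg (R : ResiduatedLattice A) (a : A) : A := R.himp a ⊥

/-- A filter: nonempty, closed under ⊙, and closed under joining with arbitrary elements. -/
def IsFilter (R : ResiduatedLattice A) (F : Set A) : Prop :=
  F.Nonempty ∧ (∀ x ∈ F, ∀ y ∈ F, R.mul x y ∈ F) ∧ (∀ x ∈ F, ∀ y : A, x ⊔ y ∈ F)

/-- Join of two filters: the filter generated by their union. -/
def FJoin (R : ResiduatedLattice A) (F G : Set A) : Set A :=
  {c | ∃ f ∈ F, ∃ g ∈ G, R.mul f g ≤ c}

/-- Coannulet a⊥ = {x | x ∨ a = 1}. -/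
def perp (R : ResiduatedLattice A) (a : A) : Set A := {x | x ⊔ a = ⊤}

/-- Powers aⁿ with a⁰ = 1 = ⊤. -/
def pow (R : ResiduatedLattice A) (a : A) : ℕ → A
  | 0 => ⊤
  | n + 1 => R.mul a (pow R a n)

/-- Filter generated by a filter F together with an element x. -/
def FGen (R : ResiduatedLattice A) (F : Set A) (x : A) : Set A :=
  {a | ∃ f ∈ F, ∃ n : ℕ, R.mul f (R.pow x n) ≤ a}

/-- Principal filter generated by a. -/
def principal (R : ResiduatedLattice A) (a : A) : Set A :=
  {b | ∃ n : ℕ, R.pow a n ≤ b}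

/-- The sink σ(F) = {a | a⊥ ⋎ F = A}. -/
def sink (R : ResiduatedLattice A) (F : Set A) : Set A :=
  {a | R.FJoin (R.perp a) F = Set.univ}

/-- Purity condition: a⊥ ⋎ F = A for every a ∈ F. -/
def PureOn (R : ResiduatedLattice A) (F : Set A) : Prop :=
  ∀ a ∈ F, R.FJoin (R.perp a) F = Set.univ

/-- Prime filter. -/
def IsPrime (R : ResiduatedLattice A) (F : Set A) : Prop :=
  R.IsFilter F ∧ F ≠ Set.univ ∧ ∀ x y : A, x ⊔ y ∈ F → x ∈ F ∨ y ∈ F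

/-- Minimal prime filter. -/
def IsMinimalPrime (R : ResiduatedLattice A) (F : Set A) : Prop :=
  R.IsPrime F ∧ ∀ G : Set A, R.IsPrime G → G ⊆ F → G = F

/-- Filter generated by an arbitrary set X. -/
def gen (R : ResiduatedLattice A) (X : Set A) : Set A :=
  {a | ∃ l : List A, (∀ x ∈ l, x ∈ X) ∧ l.foldr R.mul ⊤ ≤ a}

/-- Purely-prime filter: proper pure filter p such that F₁ ∩ F₂ = p for pure filters
implies F₁ = p or F₂ = p. -/
def PurelyPrime (R : ResiduatedLattice A) (p : Set A) : Prop :=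
  R.IsFilter p ∧ R.PureOn p ∧ p ≠ Set.univ ∧
    ∀ F₁ F₂ : Set A, R.IsFilter F₁ → R.PureOn F₁ → R.IsFilter F₂ → R.PureOn F₂ →
      F₁ ∩ F₂ = p → F₁ = p ∨ F₂ = p

/-- (H : a) = {x | x ∨ a ∈ H}. -/
def res (R : ResiduatedLattice A) (H : Set A) (a : A) : Set A :=
  {x | x ⊔ a ∈ H}

end ResiduatedLattice

open ResiduatedLattice

variable {A : Type*} [Lattice A] [BoundedOrder A]

lemma mul_le_mul_aux (R : ResiduatedLattice A) {x x' z z' : A} (h1 : x ≤ x') (h2 : z ≤ z') :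
    R.mul x z ≤ R.mul x' z' := by
  have a : R.mul x z ≤ R.mul x' z := by
    rw [R.mul_comm x z, R.mul_comm x' z]
    exact (R.adj z (R.mul z x') x).mpr (h1.trans ((R.adj z (R.mul z x') x').mp le_rfl))
  exact a.trans ((R.adj x' (R.mul x' z') z).mpr (h2.trans ((R.adj x' (R.mul x' z') z').mp le_rfl)))

lemma pow_add_aux (R : ResiduatedLattice A) (a : A) (m n : ℕ) :
    R.pow a (m + n) = R.mul (R.pow a m) (R.pow a n) := by
  induction m with
  | zero => simp [ResiduatedLattice.pow, R.mul_comm, R.mul_top]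
  | succ m ih =>
      have : m + 1 + n = (m + n) + 1 := by omega
      rw [this]
      show R.mul a (R.pow a (m + n)) = _
      rw [ih, ← R.mul_assoc]
      rfl

lemma principal_isFilter (R : ResiduatedLattice A) (a : A) : R.IsFilter (R.principal a) := by
  refine ⟨⟨⊤, 0, le_rfl⟩, ?_, ?_⟩
  · rintro x ⟨m, hm⟩ y ⟨n, hn⟩
    exact ⟨m + n, by rw [pow_add_aux]; exact mul_le_mul_aux R hm hn⟩
  · rintro x ⟨m, hm⟩ y
    exact ⟨m, hm.trans le_sup_left⟩

lemma sink_mono (R : ResiduatedLattice A) {F G : Set A} (h : F ⊆ G) :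
    R.sink F ⊆ R.sink G := by
  intro a ha
  apply Set.eq_univ_of_univ_subset
  rw [← ha]
  rintro c ⟨f, hf, g, hg, hle⟩
  exact ⟨f, hf, g, h hg, hle⟩

lemma sink_subset (R : ResiduatedLattice A) {F : Set A} (hF : R.IsFilter F) :
    R.sink F ⊆ F := by
  intro a ha
  have : a ∈ R.FJoin (R.perp a) F := by rw [ha]; trivial
  obtain ⟨f, hf, g, hg, hle⟩ := this
  -- show g ≤ a
  have hga : R.mul g a ≤ a := by
    have : R.mul g a ≤ R.mul ⊤ a := mul_le_mul_aux R le_top le_rfl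
    rwa [R.mul_comm ⊤ a, R.mul_top] at this
  have hgf : R.mul g f ≤ a := by rw [R.mul_comm]; exact hle
  have hfa : f ⊔ a ≤ R.himp g a :=
    sup_le ((R.adj g a f).mp hgf) ((R.adj g a a).mp hga)
  have hg_le : g ≤ a := by
    have : R.mul g (f ⊔ a) ≤ a := (R.adj g a (f ⊔ a)).mpr hfa
    rwa [hf, R.mul_top] at this
  have := hF.2.2 g hg a
  rwa [sup_eq_right.mpr hg_le] at this

theorem stmt12 (R : ResiduatedLattice A) :
    (∀ F : Set A, R.IsFilter F → R.sink F = F) ↔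
      (∀ a : A, R.sink (R.principal a) = R.principal a) := by
  constructor
  · intro h a
    exact h _ (principal_isFilter R a)
  · intro h F hF
    apply Set.Subset.antisymm (sink_subset R hF)
    intro a ha
    have hpa : R.principal a ⊆ F := by
      rintro b ⟨n, hn⟩
      have haF : ∀ n, R.pow a n ∈ F := by
        intro n
        induction n with
        | zero =>
            obtain ⟨x, hx⟩ := hF.1
            have := hF.2.2 x hx ⊤
            simpa [ResiduatedLattice.pow, sup_eq_right.mpr (le_top : x ≤ ⊤)] using this
        | succ n ih => exact hF.2.1 a ha _ ih
      have := hF.2.2 _ (haF n) b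
      rwa [sup_eq_right.mpr hn] at this
    have : a ∈ R.sink (R.principal a) := by rw [h a]; exact ⟨1, by simpa [ResiduatedLattice.pow] using (R.mul_top a).le⟩
    exact sink_mono R hpa this
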